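/- Let G be a graph with ω(G) > (2/3)(Δ(G) + 1), and let Q be a collection of maximum cliques of G whose intersection graph X_Q is connected. Then the intersection ⋂Q of all cliques in Q is nonempty. -/

import Mathlib

open SimpleGraph Finset

section Helpers

variable {V : Type*} [Fintype V] [DecidableEq V] (G : SimpleGraph V) [DecidableRel G.Adj]

lemma kg_clique_subset_nbhd {s : Finset V} (hs : G.IsClique (s : Set V)) {v : V} (hv : v ∈ s) :
    s ⊆ insert v (G.neighborFinset v) := by
  intro x hx
  rcases eq_or_ne x v with rfl | hxv
  · exact Finset.mem_insert_self _ _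
  · exact Finset.mem_insert_of_mem (by
      rw [SimpleGraph.mem_neighborFinset]
      exact hs (by exact_mod_cast hv) (by exact_mod_cast hx) hxv.symm)

lemma kg_union_card_le (Q : Finset (Finset V)) (hQ : ∀ s ∈ Q, G.IsClique (s : Set V)) {v : V}
    (hv : ∀ s ∈ Q, v ∈ s) : (Q.sup id).card ≤ G.maxDegree + 1 := by
  have hsub : Q.sup id ⊆ insert v (G.neighborFinset v) :=
    Finset.sup_le fun s hs => kg_clique_subset_nbhd G (hQ s hs) (hv s hs)
  calc (Q.sup id).card ≤ (insert v (G.neighborFinset v)).card := Finset.card_le_card hsub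
    _ ≤ (G.neighborFinset v).card + 1 := Finset.card_insert_le _ _
    _ = G.degree v + 1 := by rw [G.card_neighborFinset_eq_degree]
    _ ≤ G.maxDegree + 1 := by have := G.degree_le_maxDegree v; omega

/-- Hajnal's lemma: for a family of maximum cliques, `|⋂Q| + |⋃Q| ≥ 2ω`. -/
lemma kg_hajnal {Q : Finset (Finset V)} (hne : Q.Nonempty)
    (hQ : ∀ s ∈ Q, G.IsNClique G.cliqueNum s) :
    2 * G.cliqueNum ≤ (Q.inf' hne id).card + (Q.sup id).card := by
  induction hne using Finset.Nonempty.cons_induction with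
  | singleton a =>
    have ha : G.IsNClique G.cliqueNum a := hQ a (by simp)
    simp [ha.card_eq, two_mul]
  | cons A Q' hA hne ih =>
    have hQ' : ∀ s ∈ Q', G.IsNClique G.cliqueNum s := fun s hs => hQ s (by simp [hs])
    have hAcl : G.IsNClique G.cliqueNum A := hQ A (by simp)
    have ih' := ih hQ'
    set D := Q'.inf' hne id with hD
    set U := Q'.sup id with hU
    obtain ⟨s0, hs0⟩ := hne
    have hclique : G.IsClique (((D \ A) ∪ (A ∩ U) : Finset V) : Set V) := by
      intro x hx y hy hxy
      simp only [Finset.coe_union, Set.mem_union, Finset.coe_sdiff, Finset.coe_inter,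
        Set.mem_diff, Set.mem_inter_iff, Finset.mem_coe] at hx hy
      have key : ∀ a b : V, a ∈ D → b ∈ A → b ∈ U → a ≠ b → G.Adj a b := by
        intro a b haD hbA hbU hab
        obtain ⟨C, hCQ, hbC⟩ := Finset.mem_sup.mp hbU
        have haC : a ∈ C := Finset.inf'_le id hCQ haD
        exact (hQ' C hCQ).isClique (by exact_mod_cast haC) (by exact_mod_cast hbC) hab
      rcases hx with ⟨hxD, _⟩ | ⟨hxA, hxU⟩ <;> rcases hy with ⟨hyD, _⟩ | ⟨hyA, hyU⟩
      · have hsD : (D : Set V) ⊆ (s0 : Set V) := by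
          exact_mod_cast Finset.inf'_le id hs0
        exact (hQ' s0 hs0).isClique (hsD hxD) (hsD hyD) hxy
      · exact key x y hxD hyA hyU hxy
      · exact (key y x hyD hxA hxU hxy.symm).symm
      · exact hAcl.isClique (by exact_mod_cast hxA) (by exact_mod_cast hyA) hxy
    have hcard : ((D \ A) ∪ (A ∩ U)).card ≤ G.cliqueNum :=
      IsClique.card_le_cliqueNum (tc := hclique)
    have hdisj : Disjoint (D \ A) (A ∩ U) := by
      refine Finset.disjoint_left.mpr fun x hx hx' => ?_
      exact (Finset.mem_sdiff.mp hx).2 (Finset.mem_inter.mp hx').1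
    rw [Finset.card_union_of_disjoint hdisj] at hcard
    have e1 : (D ∩ A).card + (D \ A).card = D.card := Finset.card_inter_add_card_sdiff D A
    have e2 : (A ∪ U).card + (A ∩ U).card = A.card + U.card := by
      rw [add_comm]; exact Finset.card_inter_add_card_union A U
    have hAω : A.card = G.cliqueNum := hAcl.card_eq
    rw [Finset.inf'_cons, Finset.sup_cons]
    show 2 * G.cliqueNum ≤ (A ∩ D).card + (A ∪ U).card
    rw [Finset.inter_comm]
    omega

end Helpers

open SimpleGraph

/-- The intersection graph `X_Q` of a collection `Q` of cliques: vertices are the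
cliques in `Q`, two distinct cliques being adjacent iff they intersect. -/
def interGraph {V : Type*} [DecidableEq V] (Q : Finset (Finset V)) :
    SimpleGraph {s // s ∈ Q} where
  Adj A B := A ≠ B ∧ ((A : Finset V) ∩ (B : Finset V)).Nonempty
  symm := by
    refine ⟨?_⟩
    rintro A B ⟨hne, h⟩
    exact ⟨hne.symm, by rwa [Finset.inter_comm]⟩
  loopless := by refine ⟨?_⟩; rintro A ⟨hne, -⟩; exact hne rfl

/-- A walk in `interGraph Q` avoiding the clique `A` yields reachability in
`interGraph (Q.erase A)`. -/
lemma kg_walk_avoid {V : Type*} [DecidableEq V] {Q : Finset (Finset V)} {A : Finset V} :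
    ∀ {u w : {s // s ∈ Q}} (p : (interGraph Q).Walk u w),
      (∀ x ∈ p.support, x.1 ≠ A) → ∀ (hu : u.1 ∈ Q.erase A) (hw : w.1 ∈ Q.erase A),
      (interGraph (Q.erase A)).Reachable ⟨u.1, hu⟩ ⟨w.1, hw⟩
  | u, _, SimpleGraph.Walk.nil, _, hu, hw => SimpleGraph.Reachable.refl _
  | u, w, SimpleGraph.Walk.cons (v := b) h p, hp, hu, hw => by
    have hbA : b.1 ≠ A := hp b (by simp [SimpleGraph.Walk.support_cons])
    have hb : b.1 ∈ Q.erase A := Finset.mem_erase.mpr ⟨hbA, b.2⟩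
    have hadj : (interGraph (Q.erase A)).Adj ⟨u.1, hu⟩ ⟨b.1, hb⟩ :=
      ⟨fun hc => h.1 (Subtype.ext (congrArg (Subtype.val : {s // s ∈ Q.erase A} → Finset V) hc)), h.2⟩
    exact hadj.reachable.trans
      (kg_walk_avoid p (fun x hx => hp x (by simp [SimpleGraph.Walk.support_cons, hx])) hb hw)

/-- From any vertex distinct from a farthest vertex `A`, there is a walk to the root
avoiding `A`. -/
lemma kg_exists_avoid {W : Type*} [DecidableEq W] {H : SimpleGraph W} (hconn : H.Connected)
    {r A : W} (hrA : r ≠ A)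
    (hmax : ∀ u : W, H.dist r u ≤ H.dist r A) :
    ∀ u : W, u ≠ A → ∃ p : H.Walk u r, ∀ x ∈ p.support, x ≠ A := by
  intro u hu
  obtain ⟨p, hp⟩ := (hconn u r).exists_walk_length_eq_dist
  by_cases hAs : A ∈ p.support
  · exfalso
    have hlen : (p.takeUntil A hAs).length + (p.dropUntil A hAs).length = p.length := by
      rw [← SimpleGraph.Walk.length_append, SimpleGraph.Walk.take_spec]
    have h1 : (p.takeUntil A hAs).length ≠ 0 := fun h =>
      hu (SimpleGraph.Walk.eq_of_length_eq_zero h)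
    have h2 : H.dist A r ≤ (p.dropUntil A hAs).length := SimpleGraph.dist_le _
    have c1 : H.dist u r = H.dist r u := SimpleGraph.dist_comm
    have c2 : H.dist A r = H.dist r A := SimpleGraph.dist_comm
    have := hmax u
    omega
  · exact ⟨p, fun x hx hxA => hAs (hxA ▸ hx)⟩

lemma kg_aux {V : Type*} [Fintype V] [DecidableEq V] (G : SimpleGraph V) [DecidableRel G.Adj]
    (hω : 3 * G.cliqueNum > 2 * (G.maxDegree + 1)) :
    ∀ n (Q : Finset (Finset V)), Q.card = n →
      (∀ s ∈ Q, G.IsNClique G.cliqueNum s) → (interGraph Q).Connected →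
      ∃ x, ∀ s ∈ Q, x ∈ s := by
  intro n
  induction n using Nat.strong_induction_on with
  | _ n ih =>
  intro Q hcard hQ hconn
  obtain ⟨r⟩ : Nonempty {s // s ∈ Q} := hconn.nonempty
  by_cases h1 : Q.card ≤ 1
  · -- single clique
    have hω1 : 1 ≤ G.cliqueNum := by omega
    have hrne : (r.1 : Finset V).Nonempty := by
      rw [← Finset.card_pos, (hQ r.1 r.2).card_eq]; omega
    obtain ⟨x, hx⟩ := hrne
    refine ⟨x, fun s hs => ?_⟩
    have : s = r.1 := Finset.card_le_one.mp h1 s hs r.1 r.2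
    rwa [this]
  · push_neg at h1
    -- choose a farthest vertex A from r
    have hcardW : Fintype.card {s // s ∈ Q} = Q.card := Fintype.card_coe Q
    have herase : (Finset.univ.erase r).Nonempty := by
      rw [← Finset.card_pos, Finset.card_erase_of_mem (Finset.mem_univ r),
        Finset.card_univ, hcardW]
      omega
    obtain ⟨A, hAmem, hAmax⟩ :=
      Finset.exists_max_image (Finset.univ.erase r) ((interGraph Q).dist r) herase
    have hAr : A ≠ r := (Finset.mem_erase.mp hAmem).1
    have hmax : ∀ u, (interGraph Q).dist r u ≤ (interGraph Q).dist r A := by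
      intro u
      rcases eq_or_ne u r with rfl | h
      · simp [SimpleGraph.dist_self]
      · exact hAmax u (Finset.mem_erase.mpr ⟨h, Finset.mem_univ u⟩)
    have avoid := kg_exists_avoid hconn hAr.symm hmax
    set Q' := Q.erase A.1 with hQ'def
    have hQ'card : Q'.card = Q.card - 1 := Finset.card_erase_of_mem A.2
    have hQ'cl : ∀ s ∈ Q', G.IsNClique G.cliqueNum s := fun s hs =>
      hQ s (Finset.mem_of_mem_erase hs)
    have hr' : r.1 ∈ Q' := Finset.mem_erase.mpr
      ⟨fun hc => hAr (Subtype.ext hc.symm), r.2⟩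
    -- connectivity of the smaller intersection graph
    have hconn' : (interGraph Q').Connected := by
      have reach : ∀ u' : {s // s ∈ Q'}, (interGraph Q').Reachable u' ⟨r.1, hr'⟩ := by
        intro u'
        have hu'A : u'.1 ≠ A.1 := (Finset.mem_erase.mp u'.2).1
        have hu : (⟨u'.1, Finset.mem_of_mem_erase u'.2⟩ : {s // s ∈ Q}) ≠ A :=
          fun h => hu'A (congrArg Subtype.val h)
        obtain ⟨p, hp⟩ := avoid _ hu
        exact kg_walk_avoid p (fun x hx hc => hp x hx (Subtype.ext hc)) u'.2 hr'
      have : Nonempty {s // s ∈ Q'} := ⟨⟨r.1, hr'⟩⟩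
      exact ⟨fun u' w' => (reach u').trans (reach w').symm⟩
    -- the intersection over Q'
    obtain ⟨v, hv⟩ := ih (Q.card - 1) (by omega) Q' hQ'card hQ'cl hconn'
    -- a neighbour B of A in the intersection graph
    obtain ⟨p⟩ := hconn.preconnected A r
    have hpnil : ¬ p.Nil := SimpleGraph.Walk.not_nil_of_ne hAr
    set B := p.getVert 1 with hBdef
    have hABadj : (interGraph Q).Adj A B := p.adj_snd hpnil
    have hBA1 : B.1 ≠ A.1 := fun hc => hABadj.1 (Subtype.ext hc.symm)
    have hB' : B.1 ∈ Q' := Finset.mem_erase.mpr ⟨hBA1, B.2⟩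
    have hQ'ne : Q'.Nonempty := ⟨B.1, hB'⟩
    set D := Q'.inf' hQ'ne id with hDdef
    have hvD : v ∈ D := by
      have : {v} ≤ Q'.inf' hQ'ne id :=
        Finset.le_inf' hQ'ne id fun b hb => Finset.singleton_subset_iff.mpr (hv b hb)
      exact Finset.singleton_subset_iff.mp this
    have hDsub : D ⊆ B.1 := Finset.inf'_le id hB'
    have hUcard : (Q'.sup id).card ≤ G.maxDegree + 1 :=
      kg_union_card_le G Q' (fun s hs => (hQ'cl s hs).isClique) hv
    have hHaj := kg_hajnal G hQ'ne hQ'cl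
    rw [← hDdef] at hHaj
    -- |A ∪ B| ≤ Δ + 1
    obtain ⟨w0, hw0⟩ := hABadj.2
    have hw0A : w0 ∈ A.1 := (Finset.mem_inter.mp hw0).1
    have hw0B : w0 ∈ B.1 := (Finset.mem_inter.mp hw0).2
    have hABu : (A.1 ∪ B.1).card ≤ G.maxDegree + 1 := by
      have hsub : A.1 ∪ B.1 ⊆ insert w0 (G.neighborFinset w0) :=
        Finset.union_subset
          (kg_clique_subset_nbhd G (hQ A.1 A.2).isClique hw0A)
          (kg_clique_subset_nbhd G (hQ B.1 B.2).isClique hw0B)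
      calc (A.1 ∪ B.1).card ≤ (insert w0 (G.neighborFinset w0)).card :=
            Finset.card_le_card hsub
        _ ≤ (G.neighborFinset w0).card + 1 := Finset.card_insert_le _ _
        _ = G.degree w0 + 1 := by rw [G.card_neighborFinset_eq_degree]
        _ ≤ G.maxDegree + 1 := by have := G.degree_le_maxDegree w0; omega
    have hiu : (A.1 ∩ B.1).card + (A.1 ∪ B.1).card = A.1.card + B.1.card :=
      Finset.card_inter_add_card_union A.1 B.1
    have hAc : A.1.card = G.cliqueNum := (hQ A.1 A.2).card_eq
    have hBc : B.1.card = G.cliqueNum := (hQ B.1 B.2).card_eq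
    have h3 : (D ∩ (A.1 ∩ B.1)).card + (D ∪ (A.1 ∩ B.1)).card
        = D.card + (A.1 ∩ B.1).card := Finset.card_inter_add_card_union _ _
    have h4 : (D ∪ (A.1 ∩ B.1)).card ≤ G.cliqueNum := by
      rw [← hBc]
      exact Finset.card_le_card (Finset.union_subset hDsub Finset.inter_subset_right)
    have hpos : 0 < (D ∩ (A.1 ∩ B.1)).card := by omega
    obtain ⟨x, hx⟩ := Finset.card_pos.mp hpos
    have hxD : x ∈ D := (Finset.mem_inter.mp hx).1
    have hxA : x ∈ A.1 := (Finset.mem_inter.mp (Finset.mem_inter.mp hx).2).1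
    refine ⟨x, fun s hs => ?_⟩
    rcases eq_or_ne s A.1 with rfl | hsA
    · exact hxA
    · exact Finset.inf'_le id (Finset.mem_erase.mpr ⟨hsA, hs⟩) hxD

/-- Kostochka's lemma: if `ω(G) > (2/3)(Δ(G)+1)` and `Q` is a collection of maximum
cliques of `G` whose intersection graph is connected, then `⋂ Q ≠ ∅`. -/
theorem kostochka_clique_graph {V : Type*} [Fintype V] [DecidableEq V]
    (G : SimpleGraph V) [DecidableRel G.Adj]
    (hω : 3 * G.cliqueNum > 2 * (G.maxDegree + 1))
    (Q : Finset (Finset V)) (hQ : ∀ s ∈ Q, G.IsNClique G.cliqueNum s)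
    (hconn : (interGraph Q).Connected) :
    (⋂ s ∈ Q, ((s : Finset V) : Set V)).Nonempty := by
  obtain ⟨x, hx⟩ := kg_aux G hω Q.card Q rfl hQ hconn
  exact ⟨x, Set.mem_iInter₂.mpr fun s hs => by exact_mod_cast hx s hs⟩
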